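/- Let n ≥ 2 and let ζ = ξ + iη ∈ ℂ^{n+1} satisfy ζ·ζ = 0, ζ ≠ 0, and ‖ξ‖ ≥ 1. Then there exists x ∈ S^n with ζ·x = 1, i.e., the corresponding complex horosphere contains a real point. -/

import Mathlib

open scoped BigOperators
open scoped InnerProductSpace

/-- if n ≥ 2, ζ·ζ = 0, ζ ≠ 0 and ‖Re ζ‖ ≥ 1, then the corresponding
complex horosphere contains a real point of S^n. -/
theorem stmt2 (n : ℕ) (hn : 2 ≤ n) (ζ : Fin (n + 1) → ℂ)
    (ξ : EuclideanSpace ℝ (Fin (n + 1))) (hξ : ∀ j, ξ j = (ζ j).re)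
    (hζ : ζ ≠ 0) (hiso : ∑ j, ζ j ^ 2 = 0) (hnorm : 1 ≤ ‖ξ‖) :
    ∃ x : EuclideanSpace ℝ (Fin (n + 1)),
      ‖x‖ = 1 ∧ ∑ j, ζ j * (x j : ℂ) = 1 := by
  classical
  let E := EuclideanSpace ℝ (Fin (n + 1))
  set η : E := WithLp.toLp 2 (fun j => (ζ j).im) with hη
  have hξpos : (0:ℝ) < ‖ξ‖ := lt_of_lt_of_le one_pos hnorm
  have hξne : ‖ξ‖ ≠ 0 := ne_of_gt hξpos
  -- imaginary part of the isotropy condition: ⟪ξ, η⟫ = 0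
  have him : (⟪ξ, η⟫_ℝ : ℝ) = 0 := by
    have h0 : (∑ j, ζ j ^ 2).im = 0 := by rw [hiso]; simp
    rw [Complex.im_sum] at h0
    have hterm : ∀ j, (ζ j ^ 2).im = 2 * (ξ j * η j) := by
      intro j
      rw [sq, Complex.mul_im, hξ j, hη]
      ring
    rw [Finset.sum_congr rfl (fun j _ => hterm j), ← Finset.mul_sum] at h0
    have hs : ∑ j, ξ j * η j = 0 := by linarith
    rw [PiLp.inner_apply]
    simpa [mul_comm] using hs
  -- find a unit vector orthogonal to both ξ and η
  have hdim : Module.finrank ℝ E = n + 1 := by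
    simp [E, finrank_euclideanSpace]
  set K := (Submodule.span ℝ ({ξ, η} : Set E))ᗮ with hK
  have hKne : K ≠ ⊥ := by
    intro hbot
    have htop : Submodule.span ℝ ({ξ, η} : Set E) = ⊤ := by
      rwa [Submodule.orthogonal_eq_bot_iff] at hbot
    have hle : Module.finrank ℝ (Submodule.span ℝ ({ξ, η} : Set E)) ≤ 2 := by
      refine (finrank_span_le_card ({ξ, η} : Set E)).trans ?_
      rw [Set.toFinset_insert, Set.toFinset_singleton]
      exact (Finset.card_insert_le _ _).trans (by simp)
    rw [htop] at hle
    rw [finrank_top, hdim] at hle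
    omega
  obtain ⟨w, hwK, hw0⟩ := Submodule.ne_bot_iff K |>.mp hKne
  set u : E := ‖w‖⁻¹ • w with hu
  have hwnorm : ‖w‖ ≠ 0 := norm_ne_zero_iff.mpr hw0
  have hunorm : ‖u‖ = 1 := by
    rw [hu, norm_smul, norm_inv, norm_norm, inv_mul_cancel₀ hwnorm]
  have hξmem : ξ ∈ Submodule.span ℝ ({ξ, η} : Set E) :=
    Submodule.subset_span (Set.mem_insert _ _)
  have hηmem : η ∈ Submodule.span ℝ ({ξ, η} : Set E) :=
    Submodule.subset_span (Set.mem_insert_of_mem _ rfl)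
  rw [hK, Submodule.mem_orthogonal] at hwK
  have hξu : ⟪ξ, u⟫_ℝ = 0 := by
    rw [hu, real_inner_smul_right, hwK ξ hξmem, mul_zero]
  have hηu : ⟪η, u⟫_ℝ = 0 := by
    rw [hu, real_inner_smul_right, hwK η hηmem, mul_zero]
  set a : ℝ := (‖ξ‖ ^ 2)⁻¹ with ha
  set b : ℝ := Real.sqrt (1 - a) with hb
  have ha_pos : 0 < a := by positivity
  have ha_le : a ≤ 1 := by
    rw [ha, inv_le_one_iff₀]
    right
    nlinarith
  have hb_nonneg : 0 ≤ b := hb ▸ Real.sqrt_nonneg _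
  have hb_sq : b ^ 2 = 1 - a := Real.sq_sqrt (by linarith)
  set x : E := a • ξ + b • u with hx
  have hξx : ⟪ξ, x⟫_ℝ = 1 := by
    rw [hx, inner_add_right, real_inner_smul_right, real_inner_smul_right,
      hξu, real_inner_self_eq_norm_sq, mul_zero, add_zero, ha]
    field_simp
  have hηx : ⟪η, x⟫_ℝ = 0 := by
    rw [hx, inner_add_right, real_inner_smul_right, real_inner_smul_right,
      hηu, real_inner_comm ξ η, him, mul_zero, mul_zero, add_zero]
  have hxnorm : ‖x‖ = 1 := by
    have h2 : ‖x‖ ^ 2 = 1 := by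
      rw [hx, norm_add_sq_real, real_inner_smul_left, real_inner_smul_right, hξu,
        norm_smul, norm_smul, mul_pow, mul_pow, hunorm, Real.norm_eq_abs,
        Real.norm_eq_abs, abs_of_pos ha_pos, abs_of_nonneg hb_nonneg, hb_sq, ha]
      field_simp
      ring
    calc ‖x‖ = Real.sqrt (‖x‖ ^ 2) := (Real.sqrt_sq (norm_nonneg x)).symm
      _ = 1 := by rw [h2, Real.sqrt_one]
  refine ⟨x, hxnorm, ?_⟩
  have hre : (∑ j, ζ j * (x j : ℂ)).re = 1 := by
    rw [Complex.re_sum]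
    have hterm : ∀ j, (ζ j * (x j : ℂ)).re = ξ j * x j := by
      intro j
      rw [Complex.mul_re, hξ j]
      simp
    rw [Finset.sum_congr rfl (fun j _ => hterm j)]
    rw [PiLp.inner_apply] at hξx
    rw [Finset.sum_congr rfl (fun j _ => mul_comm (ξ j) (x j))]
    simpa using hξx
  have him' : (∑ j, ζ j * (x j : ℂ)).im = 0 := by
    rw [Complex.im_sum]
    have hterm : ∀ j, (ζ j * (x j : ℂ)).im = η j * x j := by
      intro j
      rw [Complex.mul_im, hη]
      simp
    rw [Finset.sum_congr rfl (fun j _ => hterm j)]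
    rw [PiLp.inner_apply] at hηx
    rw [Finset.sum_congr rfl (fun j _ => mul_comm (η j) (x j))]
    simpa using hηx
  exact Complex.ext (by rw [hre]; simp) (by rw [him']; simp)
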